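/- Analytic Fredholm theorem: Let H be a complex Hilbert space, let D ⊆ ℂ be an open connected set, and let f : D → (H →L[ℂ] H) be an analytic operator-valued function such that f(z) is a compact operator for every z ∈ D. Then either (a) the operator Id − f(z) has no bounded inverse for any z ∈ D, or (b) there exists a set S ⊆ D having no accumulation points in D such that for every z ∈ D \ S the operator Id − f(z) has a bounded inverse (is an invertible element of the bounded operators on H). -/

import Mathlib

set_option linter.unusedSectionVars false
set_option maxHeartbeats 1000000

open Metric Set Filter Topology

section Aux

variable {H : Type*} [NormedAddCommGroup H] [InnerProductSpace ℂ H] [CompleteSpace H]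

open Metric Set

variable {H : Type*} [NormedAddCommGroup H] [InnerProductSpace ℂ H] [CompleteSpace H]

/-- Finite-rank approximation of a compact operator on a Hilbert space. -/
lemma aux_finrank_approx (K : H →L[ℂ] H) (hK : IsCompactOperator K) {ε : ℝ} (hε : 0 < ε) :
    ∃ (V : Submodule ℂ H), FiniteDimensional ℂ V ∧ ∃ F : H →L[ℂ] H,
      (∀ x, F x ∈ V) ∧ ‖K - F‖ < ε := by
  have hcomp : IsCompact (closure (K '' closedBall (0:H) 1)) :=
    ((isCompactOperator_iff_isCompact_closure_image_closedBall (K : H →ₛₗ[RingHom.id ℂ] H)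
      one_pos).mp hK)
  have htb : TotallyBounded (K '' closedBall (0:H) 1) :=
    (hcomp.totallyBounded).subset subset_closure
  obtain ⟨t, htfin, hcov⟩ := (totallyBounded_iff.mp htb) (ε/3) (by positivity)
  set V : Submodule ℂ H := Submodule.span ℂ t with hV
  have hVfd : FiniteDimensional ℂ V := FiniteDimensional.span_of_finite ℂ htfin
  have : CompleteSpace V := FiniteDimensional.complete ℂ V
  set P := V.orthogonalProjectionOnto with hP
  set F : H →L[ℂ] H := V.subtypeL.comp (P.comp K) with hF
  refine ⟨V, hVfd, F, fun x => (P (K x)).2, ?_⟩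
  have hbound : ∀ x : H, ‖x‖ ≤ 1 → ‖(K - F) x‖ ≤ 2 * (ε/3) := by
    intro x hx
    have hKx : K x ∈ ⋃ y ∈ t, ball y (ε/3) := hcov ⟨x, by simpa [mem_closedBall] using hx, rfl⟩
    obtain ⟨y, hyt, hyb⟩ := mem_iUnion₂.mp hKx
    have hyV : y ∈ V := Submodule.subset_span hyt
    have hPy : (P y : H) = y := Submodule.starProjection_eq_self_iff.mpr hyV
    have h1 : ‖K x - y‖ < ε/3 := by simpa [dist_eq_norm] using hyb
    have h2 : ‖y - F x‖ ≤ ε/3 := by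
      have : y - F x = (P (y - K x) : H) := by
        simp [hF, map_sub, hPy]
      rw [this]
      calc ‖(P (y - K x) : H)‖ = ‖P (y - K x)‖ := rfl
        _ ≤ ‖P‖ * ‖y - K x‖ := P.le_opNorm _
        _ ≤ 1 * ‖y - K x‖ := by
            gcongr; exact Submodule.orthogonalProjectionOnto_norm_le V
        _ ≤ ε/3 := by rw [one_mul, norm_sub_rev]; exact h1.le
    calc ‖(K - F) x‖ = ‖(K x - y) + (y - F x)‖ := by
          rw [ContinuousLinearMap.sub_apply, sub_add_sub_cancel]
      _ ≤ ‖K x - y‖ + ‖y - F x‖ := norm_add_le _ _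
      _ ≤ ε/3 + ε/3 := by have := h1.le; linarith
      _ = 2 * (ε/3) := by ring
  have : ‖K - F‖ ≤ 2 * (ε/3) := by
    refine (K - F).opNorm_le_bound (by positivity) ?_
    intro x
    rcases eq_or_ne x 0 with rfl | hx0
    · simp
    · have hn : ‖x‖ ≠ 0 := norm_ne_zero_iff.mpr hx0
      have hpos : 0 < ‖x‖ := norm_pos_iff.mpr hx0
      have hcx : ‖((‖x‖ : ℂ)⁻¹ • x : H)‖ = 1 := by
        rw [norm_smul, norm_inv, Complex.norm_real, norm_norm, inv_mul_cancel₀ hn]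
      have hb := hbound ((‖x‖ : ℂ)⁻¹ • x) (le_of_eq hcx)
      rw [map_smul, norm_smul, norm_inv, Complex.norm_real, norm_norm] at hb
      calc ‖(K - F) x‖ = ‖x‖ * (‖x‖⁻¹ * ‖(K - F) x‖) := by field_simp
        _ ≤ ‖x‖ * (2 * (ε/3)) := by gcongr
        _ = 2 * (ε/3) * ‖x‖ := by ring
  linarith



/-- For an operator `g` with range in a finite-dimensional subspace `V`,
`1 - g` is invertible iff the determinant of the induced endomorphism of `V` is nonzero. -/
lemma aux_unit_iff_det (V : Submodule ℂ H) [FiniteDimensional ℂ V]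
    (g : H →L[ℂ] H) (hg : ∀ x, g x ∈ V) :
    IsUnit ((1 : H →L[ℂ] H) - g) ↔
      LinearMap.det ((LinearMap.id : V →ₗ[ℂ] V) -
        ((V.orthogonalProjectionOnto).comp (g.comp V.subtypeL)).toLinearMap) ≠ 0 := by
  have : CompleteSpace V := FiniteDimensional.complete ℂ V
  set M : V →ₗ[ℂ] V := (LinearMap.id : V →ₗ[ℂ] V) -
    ((V.orthogonalProjectionOnto).comp (g.comp V.subtypeL)).toLinearMap with hM
  have hMapp : ∀ v : V, ((M v : V) : H) = (v : H) - g (v : H) := by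
    intro v
    have hPg : ((V.orthogonalProjectionOnto (g (v : H))) : H) = g (v : H) :=
      Submodule.starProjection_eq_self_iff.mpr (hg _)
    simp [hM, hPg]
  constructor
  · -- IsUnit (1 - g) → det M ≠ 0
    rintro ⟨u, hu⟩
    have hinj : Function.Injective M := by
      intro v w hvw
      have h1 : (v : H) - g (v : H) = (w : H) - g (w : H) := by
        rw [← hMapp, ← hMapp, hvw]
      have h3 : ((1 : H →L[ℂ] H) - g) (v : H) = ((1 : H →L[ℂ] H) - g) (w : H) := by
        simpa [ContinuousLinearMap.sub_apply] using h1
      rw [← hu] at h3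
      have h4 : (↑u⁻¹ : H →L[ℂ] H) ((u : H →L[ℂ] H) (v : H))
          = (↑u⁻¹ : H →L[ℂ] H) ((u : H →L[ℂ] H) (w : H)) := congrArg _ h3
      rw [← ContinuousLinearMap.mul_apply, ← ContinuousLinearMap.mul_apply] at h4
      norm_cast at h4
      rw [inv_mul_cancel u] at h4
      simp only [Units.val_one, ContinuousLinearMap.one_apply] at h4
      exact Subtype.ext h4
    have hbij : Function.Bijective M :=
      ⟨hinj, (LinearMap.injective_iff_surjective).mp hinj⟩
    have hE : ((LinearEquiv.ofBijective M hbij : V ≃ₗ[ℂ] V) : V →ₗ[ℂ] V) = M := by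
      ext v; rfl
    have := (LinearEquiv.ofBijective M hbij).isUnit_det'
    rw [hE] at this
    exact isUnit_iff_ne_zero.mp this
  · -- det M ≠ 0 → IsUnit (1 - g)
    intro hdet
    set b := Module.finBasis ℂ V with hb
    have hdet' : IsUnit (LinearMap.toMatrix b b M).det := by
      rw [LinearMap.det_toMatrix] at *
      exact isUnit_iff_ne_zero.mpr hdet
    set E : V ≃ₗ[ℂ] V := LinearEquiv.ofIsUnitDet hdet' with hEdef
    have hEapp : ∀ v : V, E v = M v := fun v => LinearEquiv.ofIsUnitDet_apply _ _
    set A : V →L[ℂ] V := LinearMap.toContinuousLinearMap (E.symm : V →ₗ[ℂ] V) with hA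
    have hAapp : ∀ v : V, A v = E.symm v := fun v => rfl
    set gR : H →L[ℂ] V := g.codRestrict V hg with hgR
    set B : H →L[ℂ] H := 1 + V.subtypeL.comp (A.comp gR) with hB
    have hMA : ∀ w : V, M (A w) = w := fun w => by
      rw [hAapp, ← hEapp, E.apply_symm_apply]
    have hAM : ∀ w : V, A (M w) = w := fun w => by
      rw [hAapp, ← hEapp, E.symm_apply_apply]
    have h1 : ((1 : H →L[ℂ] H) - g) * B = 1 := by
      ext x
      have key : ((M (A (gR x)) : V) : H) = g x := by rw [hMA]; rfl
      have key' : ((A (gR x) : V) : H) - g ((A (gR x) : V) : H) = g x := by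
        rw [← hMapp]; exact key
      simp only [ContinuousLinearMap.mul_apply, ContinuousLinearMap.sub_apply,
        ContinuousLinearMap.one_apply, ContinuousLinearMap.add_apply, hB,
        ContinuousLinearMap.comp_apply, Submodule.subtypeL_apply, map_add]
      rw [key']
      abel
    have h2 : B * ((1 : H →L[ℂ] H) - g) = 1 := by
      ext x
      have hkey : gR (((1 : H →L[ℂ] H) - g) x) = M (gR x) := by
        apply Subtype.ext
        rw [hMapp]
        simp [hgR, ContinuousLinearMap.sub_apply, map_sub]
      have key : ((A (gR (((1 : H →L[ℂ] H) - g) x)) : V) : H) = g x := by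
        rw [hkey, hAM]; rfl
      simp only [ContinuousLinearMap.mul_apply, ContinuousLinearMap.one_apply, hB,
        ContinuousLinearMap.add_apply, ContinuousLinearMap.comp_apply,
        Submodule.subtypeL_apply, key]
      simp [ContinuousLinearMap.sub_apply]
    exact ⟨⟨(1 : H →L[ℂ] H) - g, B, h1, h2⟩, rfl⟩



lemma aux_det_analytic (V : Submodule ℂ H) [FiniteDimensional ℂ V]
    (g : ℂ → (H →L[ℂ] H)) {z₀ : ℂ} (hg : AnalyticAt ℂ g z₀) :
    AnalyticAt ℂ (fun z => LinearMap.det ((LinearMap.id : V →ₗ[ℂ] V) -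
      ((V.orthogonalProjectionOnto).comp ((g z).comp V.subtypeL)).toLinearMap)) z₀ := by
  have : CompleteSpace V := FiniteDimensional.complete ℂ V
  set b := Module.finBasis ℂ V with hb
  set n := Module.finrank ℂ V
  -- entries are analytic
  have hentry : ∀ (i j : Fin n), AnalyticAt ℂ (fun z =>
      (LinearMap.toMatrix b b ((LinearMap.id : V →ₗ[ℂ] V) -
        ((V.orthogonalProjectionOnto).comp ((g z).comp V.subtypeL)).toLinearMap)) i j) z₀ := by
    intro i j
    have heq : (fun z =>
        (LinearMap.toMatrix b b ((LinearMap.id : V →ₗ[ℂ] V) -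
          ((V.orthogonalProjectionOnto).comp ((g z).comp V.subtypeL)).toLinearMap)) i j)
        = fun z => (b.repr (b j)) i -
            (LinearMap.toContinuousLinearMap (b.coord i)).comp (V.orthogonalProjectionOnto)
              ((g z) ((b j : V) : H)) := by
      funext z
      rw [LinearMap.toMatrix_apply]
      simp [LinearMap.sub_apply, map_sub, Module.Basis.coord_apply,
        LinearMap.coe_toContinuousLinearMap']
    rw [heq]
    apply analyticAt_const.sub
    have h1 : AnalyticAt ℂ (fun z => (g z) ((b j : V) : H)) z₀ :=
      ((ContinuousLinearMap.apply ℂ H ((b j : V) : H)).analyticAt _).comp hg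
    exact (((LinearMap.toContinuousLinearMap (b.coord i)).comp
      (V.orthogonalProjectionOnto)).analyticAt _).comp h1
  have hdet : (fun z => LinearMap.det ((LinearMap.id : V →ₗ[ℂ] V) -
      ((V.orthogonalProjectionOnto).comp ((g z).comp V.subtypeL)).toLinearMap))
      = fun z => (LinearMap.toMatrix b b ((LinearMap.id : V →ₗ[ℂ] V) -
      ((V.orthogonalProjectionOnto).comp ((g z).comp V.subtypeL)).toLinearMap)).det := by
    funext z; rw [LinearMap.det_toMatrix]
  rw [hdet]
  have hdet2 : (fun z => (LinearMap.toMatrix b b ((LinearMap.id : V →ₗ[ℂ] V) -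
      ((V.orthogonalProjectionOnto).comp ((g z).comp V.subtypeL)).toLinearMap)).det)
      = fun z => ∑ σ : Equiv.Perm (Fin n), (Equiv.Perm.sign σ : ℂ) *
          ∏ i, (LinearMap.toMatrix b b ((LinearMap.id : V →ₗ[ℂ] V) -
            ((V.orthogonalProjectionOnto).comp ((g z).comp V.subtypeL)).toLinearMap)) (σ i) i := by
    funext z
    rw [Matrix.det_apply']
  rw [hdet2]
  apply Finset.analyticAt_fun_sum
  intro σ _
  apply analyticAt_const.mul
  apply Finset.analyticAt_fun_prod
  intro i _
  exact hentry (σ i) i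

lemma aux_local (f : ℂ → (H →L[ℂ] H)) {z₀ : ℂ} (hfz : AnalyticAt ℂ f z₀)
    (hc : IsCompactOperator (f z₀)) :
    (∀ᶠ z in 𝓝 z₀, ¬ IsUnit ((1 : H →L[ℂ] H) - f z)) ∨
      (∀ᶠ z in 𝓝[≠] z₀, IsUnit ((1 : H →L[ℂ] H) - f z)) := by
  obtain ⟨V, hVfd, F, hFV, hFn⟩ := aux_finrank_approx (f z₀) hc (by norm_num : (0:ℝ) < 1/2)
  haveI := hVfd
  have hN : ∀ᶠ z in 𝓝 z₀, ‖f z - F‖ < 1/2 := by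
    have hcont : ContinuousAt (fun z => ‖f z - F‖) z₀ :=
      (hfz.continuousAt.sub continuousAt_const).norm
    exact hcont.eventually_lt continuousAt_const hFn
  set gfun : ℂ → (H →L[ℂ] H) := fun z => F * Ring.inverse (1 - (f z - F)) with hgfun
  have hu0 : ‖f z₀ - F‖ < 1 := hFn.trans (by norm_num)
  have hganal : AnalyticAt ℂ gfun z₀ := by
    apply analyticAt_const.mul
    have hinner : AnalyticAt ℂ (fun z => (1 : H →L[ℂ] H) - (f z - F)) z₀ :=
      analyticAt_const.sub (hfz.sub analyticAt_const)
    have hval : (1 : H →L[ℂ] H) - (f z₀ - F)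
        = ((Units.oneSub (f z₀ - F) hu0 : (H →L[ℂ] H)ˣ) : H →L[ℂ] H) := rfl
    have hio : AnalyticAt ℂ (Ring.inverse : (H →L[ℂ] H) → (H →L[ℂ] H))
        ((fun z => (1 : H →L[ℂ] H) - (f z - F)) z₀) := by
      show AnalyticAt ℂ _ ((1 : H →L[ℂ] H) - (f z₀ - F))
      rw [hval]; exact analyticAt_inverse (Units.oneSub (f z₀ - F) hu0)
    have hcomp := AnalyticAt.comp (𝕜 := ℂ)
      (g := (Ring.inverse : (H →L[ℂ] H) → (H →L[ℂ] H)))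
      (f := fun z => (1 : H →L[ℂ] H) - (f z - F)) (x := z₀) hio hinner
    simpa [Function.comp_def] using hcomp
  have hrange : ∀ z x, (gfun z) x ∈ V := by
    intro z x
    rw [hgfun]
    simp only [ContinuousLinearMap.mul_apply]
    exact hFV _
  have keyiff : ∀ z, ‖f z - F‖ < 1/2 →
      (IsUnit ((1 : H →L[ℂ] H) - f z) ↔
        LinearMap.det ((LinearMap.id : V →ₗ[ℂ] V) -
          ((V.orthogonalProjectionOnto).comp ((gfun z).comp V.subtypeL)).toLinearMap) ≠ 0) := by
    intro z hz
    have ht : ‖f z - F‖ < 1 := hz.trans (by norm_num)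
    have hw : Ring.inverse ((1 : H →L[ℂ] H) - (f z - F)) * ((1 : H →L[ℂ] H) - (f z - F)) = 1 :=
      Ring.inverse_mul_cancel _ (Units.oneSub (f z - F) ht).isUnit
    have hfac : ((1 : H →L[ℂ] H) - gfun z) * ((1 : H →L[ℂ] H) - (f z - F))
        = (1 : H →L[ℂ] H) - f z := by
      rw [hgfun]
      rw [sub_mul, one_mul, mul_assoc, hw, mul_one]
      abel
    have hueq : ((1 : H →L[ℂ] H) - (f z - F))
        = ((Units.oneSub (f z - F) ht : (H →L[ℂ] H)ˣ) : H →L[ℂ] H) := rfl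
    rw [← aux_unit_iff_det V (gfun z) (hrange z), ← hfac, hueq,
      Units.isUnit_mul_units]
  have hd := (aux_det_analytic V gfun hganal).eventually_eq_zero_or_eventually_ne_zero
  rcases hd with hcase | hcase
  · left
    filter_upwards [hcase, hN] with z h0 hz
    intro hun
    exact ((keyiff z hz).mp hun) h0
  · right
    filter_upwards [hcase, hN.filter_mono nhdsWithin_le_nhds] with z h0 hz
    exact (keyiff z hz).mpr h0

end Aux

/-- Analytic Fredholm theorem: for an analytic family z ↦ f(z) of compact operators
on a complex Hilbert space H, defined on an open connected set D ⊆ ℂ, either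
Id − f(z) is invertible for no z ∈ D, or it is invertible for all z outside a set
S that has no accumulation points in D. -/
theorem stmt_6
    {H : Type*} [NormedAddCommGroup H] [InnerProductSpace ℂ H] [CompleteSpace H]
    (D : Set ℂ) (hD : IsOpen D) (hDconn : IsConnected D)
    (f : ℂ → (H →L[ℂ] H))
    (hf : AnalyticOnNhd ℂ f D)
    (hcompact : ∀ z ∈ D, IsCompactOperator (f z)) :
    (∀ z ∈ D, ¬ IsUnit ((1 : H →L[ℂ] H) - f z)) ∨
    (∃ S : Set ℂ, (∀ z ∈ D, ¬ AccPt z (Filter.principal S)) ∧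
      ∀ z ∈ D \ S, IsUnit ((1 : H →L[ℂ] H) - f z)) := by
  classical
  have LD : ∀ z₀ ∈ D, (∀ᶠ z in 𝓝 z₀, ¬ IsUnit ((1 : H →L[ℂ] H) - f z)) ∨
      (∀ᶠ z in 𝓝[≠] z₀, IsUnit ((1 : H →L[ℂ] H) - f z)) :=
    fun z₀ hz₀ => aux_local f (hf z₀ hz₀) (hcompact z₀ hz₀)
  set A : Set ℂ := D ∩ {z | ∀ᶠ w in 𝓝 z, ¬ IsUnit ((1 : H →L[ℂ] H) - f w)} with hA
  by_cases hAne : A.Nonempty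
  · left
    have hAopen : IsOpen A := hD.inter isOpen_setOf_eventually_nhds
    have hclos : closure A ∩ D ⊆ A := by
      rintro z₀ ⟨hcl, hz₀D⟩
      rcases LD z₀ hz₀D with h | h
      · exact ⟨hz₀D, h⟩
      · by_contra hz₀A
        rw [mem_closure_iff_frequently] at hcl
        rw [eventually_nhdsWithin_iff] at h
        obtain ⟨x, hxA, hx⟩ := (hcl.and_eventually h).exists
        rcases eq_or_ne x z₀ with rfl | hne
        · exact hz₀A hxA
        · exact hxA.2.self_of_nhds (hx hne)
    have hDsub : D ⊆ A := by
      by_contra hns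
      have hpc := hDconn.2
      have h2open : IsOpen (closure A)ᶜ := isClosed_closure.isOpen_compl
      have hcover : D ⊆ A ∪ (closure A)ᶜ := by
        intro z hz
        by_cases hzc : z ∈ closure A
        · exact Or.inl (hclos ⟨hzc, hz⟩)
        · exact Or.inr hzc
      have hne2 : (D ∩ (closure A)ᶜ).Nonempty := by
        obtain ⟨z, hzD, hzA⟩ := not_subset.mp hns
        exact ⟨z, hzD, fun hzc => hzA (hclos ⟨hzc, hzD⟩)⟩
      have hne1 : (D ∩ A).Nonempty := by
        obtain ⟨a, ha⟩ := hAne; exact ⟨a, ha.1, ha⟩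
      obtain ⟨x, hx⟩ := hpc A (closure A)ᶜ hAopen h2open hcover hne1 hne2
      exact hx.2.2 (subset_closure hx.2.1)
    intro z hz
    exact ((hDsub hz).2).self_of_nhds
  · right
    refine ⟨{z | z ∈ D ∧ ¬ IsUnit ((1 : H →L[ℂ] H) - f z)}, ?_, ?_⟩
    · intro z hzD hacc
      rcases LD z hzD with h | h
      · exact hAne ⟨z, hzD, h⟩
      · rw [accPt_iff_frequently] at hacc
        rw [eventually_nhdsWithin_iff] at h
        obtain ⟨y, ⟨hyne, hyS⟩, hy⟩ := (hacc.and_eventually h).exists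
        exact hyS.2 (hy hyne)
    · rintro z ⟨hzD, hzS⟩
      by_contra hun
      exact hzS ⟨hzD, hun⟩
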